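/- Fix W ∈ ℂ^{N_BS×N_d} with W ≠ 0 and set V = A_G ( I ∘ (Λ B_G^H W W^H B_G) ) A_G^H ∈ ℂ^{M×M}. The function θ ↦ J(W, θ) is ℝ-Fréchet differentiable at every θ ∈ ℂ^M, and its conjugate Wirtinger gradient at θ equals the vector of diagonal entries of (2 M² N_BS / ‖W‖_F²) · Ã^H Γ² Diag(ȳ − f) Ã Θ V, where Θ = diagonal(θ) and ȳ = ȳ(W, θ); that is, for every direction v ∈ ℂ^M, the Fréchet derivative of J(W, ·) at θ in direction v equals 2 Re ( v^H g ) where g is that vector of diagonal entries. -/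

import Mathlib

open Matrix

attribute [local instance] Matrix.normedAddCommGroup Matrix.normedSpace

/-- Squared Frobenius norm of a complex matrix. -/
noncomputable def frobSq {m n : Type*} [Fintype m] [Fintype n]
    (W : Matrix m n ℂ) : ℝ :=
  ∑ i, ∑ j, Complex.normSq (W i j)

/-- The normalized average power pattern
`ȳ(W,θ) = diag( (M² N_BS/‖W‖_F²) · Ã Θ A_G ( I ∘ (Λ B_Gᴴ W Wᴴ B_G) ) A_Gᴴ Θᴴ Ãᴴ )`
(the diagonal entries are real; we take their real parts). -/
noncomputable def ybar (M NBS Nd L κM : ℕ)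
    (AG : Matrix (Fin M) (Fin L) ℂ) (BG : Matrix (Fin NBS) (Fin L) ℂ)
    (Atil : Matrix (Fin κM) (Fin M) ℂ) (Λ : Fin L → ℝ)
    (W : Matrix (Fin NBS) (Fin Nd) ℂ) (θ : Fin M → ℂ) : Fin κM → ℝ :=
  fun j =>
    ((M : ℝ) ^ 2 * NBS / frobSq W) *
      ((Atil * Matrix.diagonal θ * AG *
          Matrix.hadamard 1
            (Matrix.diagonal (fun l => (Λ l : ℂ)) * BGᴴ * W * Wᴴ * BG) *
          AGᴴ * (Matrix.diagonal θ)ᴴ * Atilᴴ) j j).re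

/-- The weighted pattern-synthesis cost `J(W,θ) = ‖Γ (f − ȳ(W,θ))‖₂²`, with
`Γ = Diag(γ)`. -/
noncomputable def costJ (M NBS Nd L κM : ℕ)
    (AG : Matrix (Fin M) (Fin L) ℂ) (BG : Matrix (Fin NBS) (Fin L) ℂ)
    (Atil : Matrix (Fin κM) (Fin M) ℂ) (Λ : Fin L → ℝ)
    (γ : Fin κM → ℝ) (f : Fin κM → ℝ)
    (W : Matrix (Fin NBS) (Fin Nd) ℂ) (θ : Fin M → ℂ) : ℝ :=
  ∑ j, (γ j * (f j - ybar M NBS Nd L κM AG BG Atil Λ W θ j)) ^ 2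

private lemma keyalg (M κM : ℕ) (Atil : Matrix (Fin κM) (Fin M) ℂ) (P : Matrix (Fin M) (Fin M) ℂ)
    (hPher : ∀ m n, (starRingEnd ℂ) (P n m) = P m n) (θ v : Fin M → ℂ)
    (γ y f : Fin κM → ℝ) (c : ℝ) :
    ∑ j, (2 * (γ j * (f j - y j))) * (γ j * (-(c *
        (∑ n, ∑ m, Atil j m * P m n * (starRingEnd ℂ) (Atil j n) *
          (θ m * (starRingEnd ℂ) (v n) + v m * (starRingEnd ℂ) (θ n))).re)))
      = 2 * (∑ m, (starRingEnd ℂ) (v m) * ((2 * c : ℝ) •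
          (∑ n, (∑ j, (starRingEnd ℂ) (Atil j m) * ((γ j : ℂ)) ^ 2 * ((y j - f j : ℝ) : ℂ)
            * Atil j n) * θ n * P n m))).re := by
  have hre : ∀ (j : Fin κM) (n m : Fin M),
      (Atil j m * P m n * (starRingEnd ℂ) (Atil j n) * (θ m * (starRingEnd ℂ) (v n))).re
        = (Atil j n * P n m * (starRingEnd ℂ) (Atil j m) * (v n * (starRingEnd ℂ) (θ m))).re := by
    intro j n m
    conv_rhs => rw [← Complex.conj_re]
    congr 1
    simp only [_root_.map_mul, Complex.conj_conj, hPher]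
    ring
  have hre2 : ∀ (j : Fin κM) (m n : Fin M),
      ((starRingEnd ℂ) (v m) * ((starRingEnd ℂ) (Atil j m) * ((γ j : ℂ)) ^ 2
          * ((y j - f j : ℝ) : ℂ) * Atil j n * θ n * P n m)).re
        = (γ j ^ 2 * (y j - f j)) *
            (Atil j m * P m n * (starRingEnd ℂ) (Atil j n) *
              (v m * (starRingEnd ℂ) (θ n))).re := by
    intro j m n
    rw [← Complex.re_ofReal_mul]
    conv_rhs => rw [← Complex.conj_re]
    congr 1
    simp only [_root_.map_mul, _root_.map_sub, _root_.map_pow, Complex.conj_conj, Complex.conj_ofReal, hPher,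
      Complex.ofReal_mul, Complex.ofReal_pow, Complex.ofReal_sub]
    ring
  have hL : ∀ j : Fin κM, (2 * (γ j * (f j - y j))) * (γ j * (-(c *
        (∑ n, ∑ m, Atil j m * P m n * (starRingEnd ℂ) (Atil j n) *
          (θ m * (starRingEnd ℂ) (v n) + v m * (starRingEnd ℂ) (θ n))).re)))
      = ∑ n, ∑ m, (4 * c * (γ j ^ 2 * (y j - f j))) *
          (Atil j m * P m n * (starRingEnd ℂ) (Atil j n) *
            (v m * (starRingEnd ℂ) (θ n))).re := by
    intro j
    rw [Complex.re_sum]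
    simp only [Complex.re_sum, mul_add, Complex.add_re, Finset.sum_add_distrib]
    have hswap : (∑ n, ∑ m,
          (Atil j m * P m n * (starRingEnd ℂ) (Atil j n) *
            (θ m * (starRingEnd ℂ) (v n))).re)
        = ∑ n, ∑ m, (Atil j m * P m n * (starRingEnd ℂ) (Atil j n) *
            (v m * (starRingEnd ℂ) (θ n))).re := by
      rw [show (∑ n, ∑ m,
            (Atil j m * P m n * (starRingEnd ℂ) (Atil j n) *
              (θ m * (starRingEnd ℂ) (v n))).re)
          = ∑ n, ∑ m, (Atil j n * P n m * (starRingEnd ℂ) (Atil j m) *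
              (v n * (starRingEnd ℂ) (θ m))).re from
        Finset.sum_congr rfl fun n _ => Finset.sum_congr rfl fun m _ => hre j n m]
      exact Finset.sum_comm
    rw [hswap]
    simp only [← Finset.mul_sum]
    ring
  calc (∑ j, (2 * (γ j * (f j - y j))) * (γ j * (-(c *
        (∑ n, ∑ m, Atil j m * P m n * (starRingEnd ℂ) (Atil j n) *
          (θ m * (starRingEnd ℂ) (v n) + v m * (starRingEnd ℂ) (θ n))).re))))
      = ∑ j, ∑ n, ∑ m, (4 * c * (γ j ^ 2 * (y j - f j))) *
          (Atil j m * P m n * (starRingEnd ℂ) (Atil j n) *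
            (v m * (starRingEnd ℂ) (θ n))).re :=
        Finset.sum_congr rfl fun j _ => hL j
    _ = ∑ m, ∑ n, ∑ j, (4 * c * (γ j ^ 2 * (y j - f j))) *
          (Atil j m * P m n * (starRingEnd ℂ) (Atil j n) *
            (v m * (starRingEnd ℂ) (θ n))).re := by
        rw [show (∑ j : Fin κM, ∑ n : Fin M, ∑ m : Fin M,
              (4 * c * (γ j ^ 2 * (y j - f j))) *
                (Atil j m * P m n * (starRingEnd ℂ) (Atil j n) *
                  (v m * (starRingEnd ℂ) (θ n))).re)
            = ∑ n : Fin M, ∑ j : Fin κM, ∑ m : Fin M,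
              (4 * c * (γ j ^ 2 * (y j - f j))) *
                (Atil j m * P m n * (starRingEnd ℂ) (Atil j n) *
                  (v m * (starRingEnd ℂ) (θ n))).re from Finset.sum_comm]
        rw [show (∑ n : Fin M, ∑ j : Fin κM, ∑ m : Fin M,
              (4 * c * (γ j ^ 2 * (y j - f j))) *
                (Atil j m * P m n * (starRingEnd ℂ) (Atil j n) *
                  (v m * (starRingEnd ℂ) (θ n))).re)
            = ∑ n : Fin M, ∑ m : Fin M, ∑ j : Fin κM,
              (4 * c * (γ j ^ 2 * (y j - f j))) *
                (Atil j m * P m n * (starRingEnd ℂ) (Atil j n) *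
                  (v m * (starRingEnd ℂ) (θ n))).re from
          Finset.sum_congr rfl fun n _ => Finset.sum_comm]
        exact Finset.sum_comm
    _ = 2 * (∑ m, (starRingEnd ℂ) (v m) * ((2 * c : ℝ) •
          (∑ n, (∑ j, (starRingEnd ℂ) (Atil j m) * ((γ j : ℂ)) ^ 2 * ((y j - f j : ℝ) : ℂ)
            * Atil j n) * θ n * P n m))).re := by
        rw [Complex.re_sum, Finset.mul_sum]
        refine Finset.sum_congr rfl fun m _ => ?_
        simp only [mul_smul_comm, Complex.smul_re, smul_eq_mul, Finset.sum_mul,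
          Finset.mul_sum, Complex.re_sum]
        simp only [hre2]
        exact Finset.sum_congr rfl fun n _ => Finset.sum_congr rfl fun j _ => by ring

/-- For fixed `W ≠ 0` and `V = A_G ( I ∘ (Λ B_Gᴴ W Wᴴ B_G) ) A_Gᴴ`,
the map `θ ↦ J(W,θ)` is ℝ-Fréchet differentiable at every `θ`, with conjugate Wirtinger
gradient equal to the diagonal of `(2M²N_BS/‖W‖_F²) Ãᴴ Γ² Diag(ȳ−f) Ã Θ V`, i.e. the
derivative in direction `v` equals `2 Re (vᴴ g)` with `g` that diagonal. -/
theorem stmt2 (M NBS Nd L κM : ℕ) (hM : 0 < M) (hNBS : 0 < NBS) (hNd : 0 < Nd)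
    (hL : 0 < L) (hκM : 0 < κM)
    (AG : Matrix (Fin M) (Fin L) ℂ) (BG : Matrix (Fin NBS) (Fin L) ℂ)
    (Atil : Matrix (Fin κM) (Fin M) ℂ) (Λ : Fin L → ℝ) (hΛ : ∀ l, 0 ≤ Λ l)
    (γ : Fin κM → ℝ) (hγ : ∀ j, 0 ≤ γ j) (f : Fin κM → ℝ)
    (W : Matrix (Fin NBS) (Fin Nd) ℂ) (hW : W ≠ 0)
    (θ : Fin M → ℂ) :
    ∃ D : (Fin M → ℂ) →L[ℝ] ℝ,
      HasFDerivAt (fun θ' : Fin M → ℂ => costJ M NBS Nd L κM AG BG Atil Λ γ f W θ') D θ ∧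
        ∀ v : Fin M → ℂ,
          D v =
            2 * (∑ m : Fin M, (starRingEnd ℂ) (v m) *
              Matrix.diag
                ((2 * (M : ℝ) ^ 2 * NBS / frobSq W) •
                  (Atilᴴ * Matrix.diagonal (fun j => ((γ j) ^ 2 : ℂ)) *
                    Matrix.diagonal
                      (fun j => ((ybar M NBS Nd L κM AG BG Atil Λ W θ j - f j : ℝ) : ℂ)) *
                    Atil * Matrix.diagonal θ *
                    (AG *
                      Matrix.hadamard 1
                        (Matrix.diagonal (fun l => (Λ l : ℂ)) * BGᴴ * W * Wᴴ * BG) *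
                      AGᴴ))) m).re := by
  classical
  set c : ℝ := (M : ℝ) ^ 2 * NBS / frobSq W with hc
  set Hh : Matrix (Fin L) (Fin L) ℂ :=
    Matrix.hadamard 1 (Matrix.diagonal (fun l => (Λ l : ℂ)) * BGᴴ * W * Wᴴ * BG) with hHh
  set P : Matrix (Fin M) (Fin M) ℂ := AG * Hh * AGᴴ with hPdef
  set y : Fin κM → ℝ := ybar M NBS Nd L κM AG BG Atil Λ W θ with hydef
  -- Hermitian-ness of Hh
  have hHher : Hhᴴ = Hh := by
    set Y := BGᴴ * W with hY
    have hX : Matrix.diagonal (fun l => (Λ l : ℂ)) * BGᴴ * W * Wᴴ * BG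
        = Matrix.diagonal (fun l => (Λ l : ℂ)) * (Y * Yᴴ) := by
      rw [hY, conjTranspose_mul, conjTranspose_conjTranspose]
      simp only [Matrix.mul_assoc]
    have h1 : ∀ i, (Y * Yᴴ) i i = ∑ k, Y i k * star (Y i k) := by
      intro i
      simp only [Matrix.mul_apply, conjTranspose_apply]
    have h2 : ∀ i, star ((Y * Yᴴ) i i) = (Y * Yᴴ) i i := by
      intro i
      rw [h1, star_sum]
      exact Finset.sum_congr rfl fun k _ => by rw [star_mul', star_star, mul_comm]
    rw [hHh, hX]
    ext i j
    rw [conjTranspose_apply, Matrix.hadamard_apply, Matrix.hadamard_apply,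
      Matrix.one_apply, Matrix.one_apply]
    by_cases hij : i = j
    · subst hij
      rw [if_pos rfl, one_mul, Matrix.diagonal_mul, star_mul', h2]
      simp
    · rw [if_neg hij, if_neg (Ne.symm hij), zero_mul, zero_mul, star_zero]
  have hPH : Pᴴ = P := by
    rw [hPdef, conjTranspose_mul, conjTranspose_mul, conjTranspose_conjTranspose, hHher,
      Matrix.mul_assoc]
  have hPher : ∀ m n, (starRingEnd ℂ) (P n m) = P m n := by
    intro m n
    conv_rhs => rw [← hPH]
    rw [conjTranspose_apply, starRingEnd_apply]
  -- entry expansion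
  have hentry : ∀ (θ' : Fin M → ℂ) (j : Fin κM),
      (Atil * Matrix.diagonal θ' * AG * Hh * AGᴴ * (Matrix.diagonal θ')ᴴ * Atilᴴ) j j
        = ∑ n, ∑ m, Atil j m * P m n * (starRingEnd ℂ) (Atil j n) * θ' m
            * (starRingEnd ℂ) (θ' n) := by
    intro θ' j
    have h1 : Atil * Matrix.diagonal θ' * AG * Hh * AGᴴ * (Matrix.diagonal θ')ᴴ * Atilᴴ
        = Atil * Matrix.diagonal θ' * P * (Matrix.diagonal θ')ᴴ * Atilᴴ := by
      rw [hPdef]; simp only [Matrix.mul_assoc]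
    rw [h1, Matrix.diagonal_conjTranspose, Matrix.mul_apply]
    refine Finset.sum_congr rfl fun n _ => ?_
    rw [conjTranspose_apply, Matrix.mul_diagonal, Matrix.mul_apply, Finset.sum_mul,
      Finset.sum_mul]
    refine Finset.sum_congr rfl fun m _ => ?_
    rw [Matrix.mul_diagonal]
    simp only [starRingEnd_apply, Pi.star_apply]
    ring
  -- ybar rewrite
  have hyb : ∀ (θ' : Fin M → ℂ) (j : Fin κM),
      ybar M NBS Nd L κM AG BG Atil Λ W θ' j
        = c * (∑ n, ∑ m, Atil j m * P m n * (starRingEnd ℂ) (Atil j n) * θ' m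
            * (starRingEnd ℂ) (θ' n)).re := by
    intro θ' j
    simp only [ybar]
    rw [← hHh, ← hc, hentry]
  -- derivative building blocks
  set Cn : Fin M → ((Fin M → ℂ) →L[ℝ] ℂ) := fun n =>
    (Complex.conjCLE.toContinuousLinearMap).comp (ContinuousLinearMap.proj n) with hCn
  have hconj : ∀ n : Fin M,
      HasFDerivAt (fun θ' : Fin M → ℂ => (starRingEnd ℂ) (θ' n)) (Cn n) θ := by
    intro n
    have h0 : ⇑(Cn n) = fun θ' : Fin M → ℂ => (starRingEnd ℂ) (θ' n) := by
      funext θ'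
      simp [hCn, Complex.conjCLE_apply]
    rw [← h0]
    exact ContinuousLinearMap.hasFDerivAt _
  have hproj : ∀ m : Fin M, HasFDerivAt (fun θ' : Fin M → ℂ => θ' m)
      (ContinuousLinearMap.proj (R := ℝ) m) θ :=
    fun m => hasFDerivAt_apply m θ
  set LS : Fin κM → ((Fin M → ℂ) →L[ℝ] ℂ) := fun j =>
    ∑ n, ∑ m, (Atil j m * P m n * (starRingEnd ℂ) (Atil j n)) •
      ((θ m) • (Cn n) + (ContinuousLinearMap.proj (R := ℝ)
        (φ := fun _ : Fin M => ℂ) m).smulRight ((starRingEnd ℂ) (θ n))) with hLS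
  have hSder : ∀ j : Fin κM,
      HasFDerivAt (fun θ' : Fin M → ℂ => ∑ n, ∑ m,
          Atil j m * P m n * (starRingEnd ℂ) (Atil j n) * θ' m * (starRingEnd ℂ) (θ' n))
        (LS j) θ := by
    intro j
    rw [hLS]
    refine HasFDerivAt.fun_sum fun n _ => HasFDerivAt.fun_sum fun m _ => ?_
    have h2 := ((hproj m).mul' (hconj n)).const_mul
      (Atil j m * P m n * (starRingEnd ℂ) (Atil j n))
    have hsr : (ContinuousLinearMap.proj (R := ℝ) (φ := fun _ : Fin M => ℂ) m).smulRight
        ((starRingEnd ℂ) (θ n)) = (starRingEnd ℂ) (θ n) •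
          ContinuousLinearMap.proj (R := ℝ) (φ := fun _ : Fin M => ℂ) m :=
      ContinuousLinearMap.ext fun x => by simp [mul_comm]
    simpa [mul_assoc, hsr] using h2
  have hyder : ∀ j : Fin κM,
      HasFDerivAt (fun θ' : Fin M → ℂ => ybar M NBS Nd L κM AG BG Atil Λ W θ' j)
        (c • (Complex.reCLM.comp (LS j))) θ := by
    intro j
    have hfe : (fun θ' : Fin M → ℂ => ybar M NBS Nd L κM AG BG Atil Λ W θ' j)
        = fun θ' : Fin M → ℂ => c * (Complex.reCLM ((fun θ'' : Fin M → ℂ => ∑ n, ∑ m,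
            Atil j m * P m n * (starRingEnd ℂ) (Atil j n) * θ'' m
              * (starRingEnd ℂ) (θ'' n)) θ')) := by
      funext θ'
      rw [hyb θ' j]; rfl
    rw [hfe]
    exact (Complex.reCLM.hasFDerivAt.comp θ (hSder j)).const_mul c
  -- total derivative
  refine ⟨∑ j, (2 * (γ j * (f j - y j))) •
      ((γ j) • (-(c • (Complex.reCLM.comp (LS j))))), ?_, ?_⟩
  · have htot : HasFDerivAt (fun θ' : Fin M → ℂ =>
        ∑ j, (γ j * (f j - ybar M NBS Nd L κM AG BG Atil Λ W θ' j)) ^ 2)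
        (∑ j, (2 * (γ j * (f j - y j))) •
          ((γ j) • (-(c • (Complex.reCLM.comp (LS j)))))) θ := by
      refine HasFDerivAt.fun_sum fun j _ => ?_
      have h1 := ((hyder j).const_sub (f j)).const_mul (γ j)
      have h2 := h1.mul h1
      have h3 : (fun θ' : Fin M → ℂ =>
            (γ j * (f j - ybar M NBS Nd L κM AG BG Atil Λ W θ' j)) ^ 2)
          = fun θ' : Fin M → ℂ =>
            (γ j * (f j - ybar M NBS Nd L κM AG BG Atil Λ W θ' j))
              * (γ j * (f j - ybar M NBS Nd L κM AG BG Atil Λ W θ' j)) := by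
        funext θ'; rw [pow_two]
      rw [h3]
      have h4 : (2 * (γ j * (f j - y j))) •
            ((γ j) • (-(c • (Complex.reCLM.comp (LS j)))))
          = (γ j * (f j - y j)) •
              ((γ j) • (-(c • (Complex.reCLM.comp (LS j)))))
            + (γ j * (f j - y j)) •
              ((γ j) • (-(c • (Complex.reCLM.comp (LS j))))) := by
        rw [two_mul, add_smul]
      rw [h4]
      exact h2
    exact htot
  · intro v
    have hLSv : ∀ j : Fin κM, (LS j) v = ∑ n, ∑ m,
        Atil j m * P m n * (starRingEnd ℂ) (Atil j n) *
          (θ m * (starRingEnd ℂ) (v n) + v m * (starRingEnd ℂ) (θ n)) := by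
      intro j
      rw [hLS]
      simp only [ContinuousLinearMap.sum_apply, ContinuousLinearMap.smul_apply,
        ContinuousLinearMap.add_apply, ContinuousLinearMap.comp_apply,
        ContinuousLinearMap.smulRight_apply, ContinuousLinearMap.proj_apply,
        ContinuousLinearEquiv.coe_coe, Complex.conjCLE_apply, smul_eq_mul, hCn]
    have hDv : (∑ j, (2 * (γ j * (f j - y j))) •
          ((γ j) • (-(c • (Complex.reCLM.comp (LS j)))))) v
        = ∑ j, (2 * (γ j * (f j - y j))) * ((γ j) * (-(c * ((LS j) v).re))) := by
      simp only [ContinuousLinearMap.sum_apply, ContinuousLinearMap.smul_apply,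
        ContinuousLinearMap.neg_apply, ContinuousLinearMap.comp_apply,
        Complex.reCLM_apply, smul_eq_mul]
    have hMat : ∀ m : Fin M,
        (Atilᴴ * Matrix.diagonal (fun j => ((γ j : ℂ)) ^ 2) *
          Matrix.diagonal (fun j => ((y j - f j : ℝ) : ℂ)) * Atil * Matrix.diagonal θ * P) m m
          = ∑ n, (∑ j, (starRingEnd ℂ) (Atil j m) * ((γ j : ℂ)) ^ 2 * ((y j - f j : ℝ) : ℂ)
              * Atil j n) * θ n * P n m := by
      intro m
      rw [Matrix.mul_apply]
      refine Finset.sum_congr rfl fun n _ => ?_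
      rw [Matrix.mul_diagonal, Matrix.mul_apply, Finset.sum_mul, Finset.sum_mul,
        Finset.sum_mul, Finset.sum_mul]
      refine Finset.sum_congr rfl fun j _ => ?_
      rw [Matrix.mul_diagonal, Matrix.mul_diagonal, conjTranspose_apply, starRingEnd_apply]
    have h2c : (2 * (M : ℝ) ^ 2 * ↑NBS / frobSq W) = 2 * c := by rw [hc]; ring
    have hdiag : ∀ m : Fin M, Matrix.diag ((2 * (M : ℝ) ^ 2 * ↑NBS / frobSq W) •
        (Atilᴴ * Matrix.diagonal (fun j => ((γ j : ℂ)) ^ 2) *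
          Matrix.diagonal (fun j => ((y j - f j : ℝ) : ℂ)) * Atil * Matrix.diagonal θ * P)) m
        = (2 * c : ℝ) • (∑ n, (∑ j, (starRingEnd ℂ) (Atil j m) * ((γ j : ℂ)) ^ 2
            * ((y j - f j : ℝ) : ℂ) * Atil j n) * θ n * P n m) := by
      intro m
      rw [Matrix.diag_apply, Matrix.smul_apply, hMat m, h2c]
    rw [hDv]
    simp only [hLSv, hdiag]
    exact keyalg M κM Atil P hPher θ v γ y f c
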